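/- Fix k > 0, r₀ = 1, and for each m let v_m(r, θ) = β_m J_m(kr) e^{imθ} on the unit disk with β_m chosen so that ∥v_m∥_{L²(B₁)} = 1. Then ∥∇v_m∥_{L∞(B₁)}/k ≥ C(k) m^{3/2} for all sufficiently large m; in particular the normalized eigenfunctions have gradient sup-norm growing at least like m^{3/2}, much faster than the wavenumber k. -/

import Mathlib

open MeasureTheory

/-- The Bessel function of the first kind of integer order `m`,
defined by its power series. -/
noncomputable def besselJ (m : ℕ) (x : ℝ) : ℝ :=
  ∑' n : ℕ, ((-1 : ℝ) ^ n / (n.factorial * (n + m).factorial)) * (x / 2) ^ (2 * n + m)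

/-- The eigenfunction `v_m(r,θ) = β_m J_m(k r) e^{imθ}` on the unit disk,
viewed as a function on `ℝ² ≅ ℂ` via polar coordinates. -/
noncomputable def vEig (β : ℕ → ℝ) (k : ℝ) (m : ℕ) (z : ℂ) : ℂ :=
  (β m : ℂ) * (besselJ m (k * ‖z‖) : ℂ) *
    Complex.exp (Complex.I * (m : ℂ) * (z.arg : ℂ))

section Aux


noncomputable def bterm (m : ℕ) (x : ℝ) (n : ℕ) : ℝ :=
  ((-1 : ℝ) ^ n / (n.factorial * (n + m).factorial)) * (x / 2) ^ (2 * n + m)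

lemma besselJ_eq_tsum (m : ℕ) (x : ℝ) : besselJ m x = ∑' n, bterm m x n := rfl

lemma abs_bterm (m : ℕ) (x : ℝ) (n : ℕ) :
    |bterm m x n| = (|x| / 2) ^ (2 * n + m) / (n.factorial * (n + m).factorial) := by
  unfold bterm
  rw [abs_mul, abs_div, abs_pow, abs_pow, abs_neg, abs_one, one_pow, abs_div]
  have h1 : |(n.factorial * (n + m).factorial : ℝ)| = (n.factorial * (n + m).factorial : ℝ) := by
    rw [abs_of_pos]; positivity
  rw [h1, abs_of_nonneg (by norm_num : (0:ℝ) ≤ 2)]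
  ring

lemma abs_bterm_le (m : ℕ) (x : ℝ) (n : ℕ) :
    |bterm m x n| ≤ (|x| / 2) ^ m / m.factorial * (((x / 2) ^ 2) ^ n / n.factorial) := by
  rw [abs_bterm]
  have hx : (((x/2))^2)^n = ((|x|/2)^2)^n := by
    have : ((x/2):ℝ)^2 = (|x|/2)^2 := by rw [div_pow, div_pow, sq_abs]
    rw [this]
  have hrhs : (|x| / 2) ^ m / m.factorial * (((x / 2) ^ 2) ^ n / n.factorial)
      = (|x| / 2) ^ (2 * n + m) / (m.factorial * n.factorial) := by
    rw [hx, ← pow_mul, pow_add]; ring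
  rw [hrhs]
  apply div_le_div_of_nonneg_left (by positivity) (by positivity)
  have h := Nat.factorial_le (Nat.le_add_left m n)
  have h' : (m.factorial : ℝ) ≤ ((n+m).factorial : ℝ) := by exact_mod_cast h
  have h1 : (1:ℝ) ≤ (n.factorial : ℝ) := by exact_mod_cast Nat.one_le_iff_ne_zero.2 (Nat.factorial_ne_zero n)
  nlinarith [Nat.factorial_pos m, h', h1]

lemma summable_abs_bterm (m : ℕ) (x : ℝ) : Summable (fun n => |bterm m x n|) := by
  apply Summable.of_nonneg_of_le (fun n => abs_nonneg _) (abs_bterm_le m x)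
  exact ((Real.summable_pow_div_factorial ((x/2)^2)).mul_left _)

lemma summable_bterm (m : ℕ) (x : ℝ) : Summable (bterm m x) :=
  (summable_abs_bterm m x).of_abs

lemma tsum_exp_aux (y : ℝ) : ∑' n : ℕ, y ^ n / n.factorial = Real.exp y := by
  rw [Real.exp_eq_exp_ℝ, NormedSpace.exp_eq_tsum_div]

lemma abs_tsum_le' (f : ℕ → ℝ) (h : Summable fun n => |f n|) : |∑' n, f n| ≤ ∑' n, |f n| := by
  simpa [Real.norm_eq_abs] using norm_tsum_le_tsum_norm (f := f) (by simpa [Real.norm_eq_abs] using h)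

lemma besselJ_abs_le (m : ℕ) (x : ℝ) :
    |besselJ m x| ≤ (|x| / 2) ^ m / m.factorial * Real.exp ((x / 2) ^ 2) := by
  rw [besselJ_eq_tsum]
  calc |∑' n, bterm m x n| ≤ ∑' n, |bterm m x n| := abs_tsum_le' _ (summable_abs_bterm m x)
    _ ≤ ∑' n, (|x| / 2) ^ m / m.factorial * (((x / 2) ^ 2) ^ n / n.factorial) := by
        apply Summable.tsum_le_tsum (abs_bterm_le m x) (summable_abs_bterm m x)
        exact (Real.summable_pow_div_factorial ((x/2)^2)).mul_left _
    _ = (|x| / 2) ^ m / m.factorial * Real.exp ((x/2)^2) := by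
        rw [tsum_mul_left, tsum_exp_aux]

lemma tsum_exp_tail (y : ℝ) : ∑' n : ℕ, y ^ (n+1) / (n+1).factorial = Real.exp y - 1 := by
  have hs : Summable (fun n : ℕ => y ^ n / n.factorial) := Real.summable_pow_div_factorial y
  have h0 := Summable.tsum_eq_zero_add hs
  rw [tsum_exp_aux] at h0
  simp only [pow_zero, Nat.factorial_zero, Nat.cast_one, div_one] at h0
  linarith [h0]

set_option maxHeartbeats 2000000 in
lemma besselJ_ge (m : ℕ) (x : ℝ) (hx : 0 ≤ x) :
    (x/2)^m / m.factorial * (1 - (Real.exp ((x/2)^2) - 1)/(m+1)) ≤ besselJ m x := by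
  obtain ⟨y, hy⟩ : ∃ y : ℝ, y = ((x/2)^2 : ℝ) := ⟨_, rfl⟩
  rw [← hy]
  have hsplit : besselJ m x = bterm m x 0 + ∑' n, bterm m x (n+1) := by
    rw [besselJ_eq_tsum]; exact Summable.tsum_eq_zero_add (summable_bterm m x)
  have h0 : bterm m x 0 = (x/2)^m / m.factorial := by
    unfold bterm; simp; ring
  have hterm : ∀ n : ℕ, |bterm m x (n+1)| ≤ (x/2)^m / m.factorial * (y^(n+1)/(n+1).factorial) / (m+1) := by
    intro n
    rw [abs_bterm, abs_of_nonneg hx]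
    have hpow : (x/2)^(2*(n+1)+m) = (x/2)^m * y^(n+1) := by
      rw [hy, ← pow_mul, ← pow_add]; ring_nf
    rw [hpow]
    have hfac : ((m+1).factorial : ℝ) ≤ ((n+1+m).factorial : ℝ) := by
      exact_mod_cast Nat.factorial_le (by omega)
    have hfac2 : (m.factorial : ℝ) * (m+1) = ((m+1).factorial : ℝ) := by
      rw [Nat.factorial_succ]; push_cast; ring
    have h1 : (x/2)^m / m.factorial * (y^(n+1)/(n+1).factorial) / (m+1)
        = (x/2)^m * y^(n+1) / ((n+1).factorial * (m+1).factorial) := by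
      rw [← hfac2]
      have fm : (m.factorial:ℝ) ≠ 0 := by positivity
      have fn : (((n+1).factorial:ℕ):ℝ) ≠ 0 := by positivity
      have hm : (m:ℝ)+1 ≠ 0 := by positivity
      field_simp
    rw [h1]
    have hy0 : 0 ≤ y := by rw [hy]; positivity
    apply div_le_div_of_nonneg_left (mul_nonneg (by positivity) (pow_nonneg hy0 _)) (by positivity)
    have : (0:ℝ) < (n+1).factorial := by positivity
    nlinarith [Nat.factorial_pos (n+1), hfac, (by exact_mod_cast Nat.one_le_iff_ne_zero.2 (Nat.factorial_ne_zero (n+1)) : (1:ℝ) ≤ (n+1).factorial)]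
  have hsum_tail : Summable (fun n : ℕ => |bterm m x (n+1)|) :=
    (summable_nat_add_iff 1).2 (summable_abs_bterm m x)
  have hsumbound : Summable (fun n : ℕ => (x/2)^m / m.factorial * (y^(n+1)/(n+1).factorial) / (m+1)) := by
    have : Summable (fun n : ℕ => y^(n+1)/(n+1).factorial) :=
      (summable_nat_add_iff 1).2 (Real.summable_pow_div_factorial y)
    exact (this.mul_left _).div_const _
  have hle : (∑' n, |bterm m x (n+1)|) ≤ ∑' n, (x/2)^m / m.factorial * (y^(n+1)/(n+1).factorial) / (m+1) :=
    Summable.tsum_le_tsum hterm hsum_tail hsumbound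
  have heq : (∑' n : ℕ, (x/2)^m / m.factorial * (y^(n+1)/(n+1).factorial) / (m+1))
      = (x/2)^m / m.factorial / (m+1) * ∑' n : ℕ, (y^(n+1)/(n+1).factorial) := by
    rw [← tsum_mul_left]; exact tsum_congr fun n => by ring
  have htail : |∑' n, bterm m x (n+1)| ≤ (x/2)^m / m.factorial * (Real.exp y - 1) / (m+1) := by
    refine le_trans (le_trans (abs_tsum_le' _ hsum_tail) hle) ?_
    rw [heq, tsum_exp_tail]; exact le_of_eq (by ring)
  have habs := abs_le.1 htail
  rw [hsplit, h0]
  have hm1 : (0:ℝ) < m + 1 := by positivity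
  have : (x/2)^m / m.factorial * (1 - (Real.exp y - 1)/(m+1))
      = (x/2)^m / m.factorial - (x/2)^m / m.factorial * (Real.exp y - 1) / (m+1) := by ring
  rw [this]
  linarith [habs.1]

open Complex

noncomputable def fc (k : ℝ) (m n : ℕ) (z : ℂ) : ℂ :=
  (bterm m k n : ℂ) * (z ^ (n + m) * ((starRingEnd ℂ) z) ^ n)

-- explicit derivative
noncomputable def fd (k : ℝ) (m n : ℕ) (z : ℂ) : ℂ →L[ℝ] ℂ :=
  (bterm m k n : ℂ) •
    (z ^ (n + m) • (((1 : ℂ →L[ℂ] ℂ).smulRight ((n : ℂ) * ((starRingEnd ℂ) z) ^ (n - 1))).restrictScalars ℝ).comp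
        (Complex.conjCLE : ℂ →L[ℝ] ℂ) +
      ((starRingEnd ℂ) z) ^ n •
        (((1 : ℂ →L[ℂ] ℂ).smulRight (((n + m : ℕ) : ℂ) * z ^ (n + m - 1))).restrictScalars ℝ))

lemma conj_hasFDerivAt (z : ℂ) :
    HasFDerivAt (fun w : ℂ => (starRingEnd ℂ) w) (Complex.conjCLE : ℂ →L[ℝ] ℂ) z := by
  exact (Complex.conjCLE : ℂ →L[ℝ] ℂ).hasFDerivAt (x := z)

lemma fc_hasFDerivAt (k : ℝ) (m n : ℕ) (z : ℂ) :
    HasFDerivAt (fc k m n) (fd k m n z) z := by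
  have h1 : HasFDerivAt (fun w : ℂ => w ^ (n + m))
      ((((1 : ℂ →L[ℂ] ℂ).smulRight (((n + m : ℕ) : ℂ) * z ^ (n + m - 1))).restrictScalars ℝ)) z :=
    ((hasDerivAt_pow (n + m) z).hasFDerivAt).restrictScalars ℝ
  have h2 : HasFDerivAt (fun w : ℂ => w ^ n)
      ((((1 : ℂ →L[ℂ] ℂ).smulRight ((n : ℂ) * ((starRingEnd ℂ) z) ^ (n - 1))).restrictScalars ℝ)) ((starRingEnd ℂ) z) :=
    ((hasDerivAt_pow n ((starRingEnd ℂ) z)).hasFDerivAt).restrictScalars ℝ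
  have h3 : HasFDerivAt (fun w : ℂ => ((starRingEnd ℂ) w) ^ n)
      ((((1 : ℂ →L[ℂ] ℂ).smulRight ((n : ℂ) * ((starRingEnd ℂ) z) ^ (n - 1))).restrictScalars ℝ).comp
        (Complex.conjCLE : ℂ →L[ℝ] ℂ)) z :=
    HasFDerivAt.comp z h2 (conj_hasFDerivAt z)
  have h4 := (h1.mul h3).const_mul (bterm m k n : ℂ)
  exact h4

lemma norm_fd_le (k : ℝ) (m n : ℕ) (z : ℂ) (hz : ‖z‖ ≤ 2) :
    ‖fd k m n z‖ ≤ |bterm m k n| * ((2 * n + m) * 4 ^ (n + m)) := by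
  have hzn : (0:ℝ) ≤ ‖z‖ := norm_nonneg z
  have hp : ∀ j : ℕ, ‖z‖ ^ j ≤ 2 ^ j := fun j => pow_le_pow_left₀ hzn hz j
  apply ContinuousLinearMap.opNorm_le_bound _ (by positivity)
  intro w
  unfold fd
  simp only [ContinuousLinearMap.smul_apply, ContinuousLinearMap.add_apply,
    ContinuousLinearMap.coe_comp', Function.comp_apply,
    ContinuousLinearMap.coe_restrictScalars', ContinuousLinearMap.smulRight_apply,
    ContinuousLinearMap.one_apply, smul_eq_mul]
  have hcw : ‖(Complex.conjCLE : ℂ →L[ℝ] ℂ) w‖ = ‖w‖ := by simp [Complex.conjCLE_apply]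
  have hcz : ‖(starRingEnd ℂ) z‖ = ‖z‖ := RCLike.norm_conj z
  rw [norm_mul, Complex.norm_real, Real.norm_eq_abs, mul_assoc]
  apply mul_le_mul_of_nonneg_left _ (abs_nonneg _)
  refine le_trans (norm_add_le _ _) ?_
  simp only [norm_mul, norm_pow, hcw, hcz, Complex.norm_natCast]
  have h4 : ((4:ℝ)) ^ (n + m) = 2 ^ (2 * (n + m)) := by rw [pow_mul]; norm_num
  rw [h4]
  have e1 : ‖z‖ ^ (n + m) * (‖w‖ * ((n:ℝ) * ‖z‖ ^ (n - 1))) ≤ (n:ℝ) * 2 ^ (2 * (n + m)) * ‖w‖ := by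
    have key : ‖z‖ ^ (n + m) * ‖z‖ ^ (n - 1) ≤ 2 ^ (2 * (n + m)) := by
      rw [← pow_add]
      exact le_trans (hp _) (pow_le_pow_right₀ one_le_two (by omega))
    have hw : (0:ℝ) ≤ ‖w‖ := norm_nonneg w
    have hn0 : (0:ℝ) ≤ (n:ℝ) := Nat.cast_nonneg n
    calc ‖z‖ ^ (n + m) * (‖w‖ * ((n:ℝ) * ‖z‖ ^ (n - 1)))
        = (n:ℝ) * (‖z‖ ^ (n + m) * ‖z‖ ^ (n - 1)) * ‖w‖ := by ring
      _ ≤ (n:ℝ) * 2 ^ (2 * (n + m)) * ‖w‖ :=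
          mul_le_mul_of_nonneg_right (mul_le_mul_of_nonneg_left key hn0) hw
  have e2 : ‖z‖ ^ n * (‖w‖ * (((n:ℝ) + m) * ‖z‖ ^ (n + m - 1))) ≤ ((n:ℝ) + m) * 2 ^ (2 * (n + m)) * ‖w‖ := by
    have key : ‖z‖ ^ n * ‖z‖ ^ (n + m - 1) ≤ 2 ^ (2 * (n + m)) := by
      rw [← pow_add]
      exact le_trans (hp _) (pow_le_pow_right₀ one_le_two (by omega))
    have hw : (0:ℝ) ≤ ‖w‖ := norm_nonneg w
    have hn0 : (0:ℝ) ≤ (n:ℝ) + m := by positivity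
    calc ‖z‖ ^ n * (‖w‖ * (((n:ℝ) + m) * ‖z‖ ^ (n + m - 1)))
        = ((n:ℝ) + m) * (‖z‖ ^ n * ‖z‖ ^ (n + m - 1)) * ‖w‖ := by ring
      _ ≤ ((n:ℝ) + m) * 2 ^ (2 * (n + m)) * ‖w‖ :=
          mul_le_mul_of_nonneg_right (mul_le_mul_of_nonneg_left key hn0) hw
  push_cast
  nlinarith [e1, e2, norm_nonneg w]

-- Chunk D
lemma u_le (k : ℝ) (m n : ℕ) :
    |bterm m k n| * ((2 * n + m) * 4 ^ (n + m))
      ≤ (2 ^ (m + 1) * |k| ^ m) * ((k ^ 2) ^ n / n.factorial) := by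
  rw [abs_bterm]
  have habs : (|k| / 2) ^ (2 * n + m) = |k| ^ (2 * n + m) / 2 ^ (2 * n + m) := by
    rw [div_pow]
  have hk1 : |k| ^ (2 * n + m) = |k| ^ m * (k ^ 2) ^ n := by
    rw [pow_add, pow_mul, _root_.sq_abs, mul_comm]
  have h4 : (4 : ℝ) ^ (n + m) = 2 ^ (2 * n + m) * 2 ^ m := by
    rw [show (4:ℝ) = 2 ^ 2 by norm_num, ← pow_mul, ← pow_add]
    congr 1
    omega
  have hLHS : (|k| / 2) ^ (2 * n + m) / (n.factorial * (n + m).factorial) * ((2 * n + m) * 4 ^ (n + m))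
      = |k| ^ m * (k ^ 2) ^ n * ((2 * n + m) : ℝ) * (2 ^ (2 * n + m) * 2 ^ m)
        / (2 ^ (2 * n + m) * (n.factorial * (n + m).factorial)) := by
    rw [habs, hk1, h4]
    push_cast
    ring
  have hRHS : (2:ℝ) ^ (m + 1) * |k| ^ m * ((k ^ 2) ^ n / n.factorial)
      = (2 ^ (m + 1) * |k| ^ m * (k ^ 2) ^ n) / n.factorial := by ring
  rw [hLHS, hRHS, div_le_div_iff₀ (by positivity) (by positivity)]
  have hnat : ((2 * n + m : ℕ) : ℝ) ≤ 2 * ((n + m).factorial : ℝ) := by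
    have h1 : (2 * n + m) ≤ 2 * (n + m).factorial := by
      have := Nat.self_le_factorial (n + m)
      omega
    exact_mod_cast h1
  calc |k| ^ m * (k ^ 2) ^ n * ((2 * n + m) : ℝ) * (2 ^ (2 * n + m) * 2 ^ m) * (n.factorial : ℝ)
      = ((2 * n + m : ℕ) : ℝ) * (|k| ^ m * (k ^ 2) ^ n * 2 ^ (2 * n + m) * 2 ^ m * n.factorial) := by
        push_cast; ring
    _ ≤ 2 * ((n + m).factorial : ℝ) * (|k| ^ m * (k ^ 2) ^ n * 2 ^ (2 * n + m) * 2 ^ m * n.factorial) := by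
        apply mul_le_mul_of_nonneg_right hnat (by positivity)
    _ = 2 ^ (m + 1) * |k| ^ m * (k ^ 2) ^ n * (2 ^ (2 * n + m) * (↑n.factorial * ↑(n + m).factorial)) := by
        push_cast
        ring

lemma summable_u (k : ℝ) (m : ℕ) :
    Summable (fun n : ℕ => |bterm m k n| * ((2 * n + m) * 4 ^ (n + m))) := by
  apply Summable.of_nonneg_of_le (fun n => by positivity) (u_le k m)
  exact (Real.summable_pow_div_factorial (k ^ 2)).mul_left _

noncomputable def gfun (k : ℝ) (m : ℕ) (z : ℂ) : ℂ := ∑' n, fc k m n z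

lemma summable_fc_zero (k : ℝ) (m : ℕ) (hm : 1 ≤ m) : Summable (fun n => fc k m n 0) := by
  have : (fun n => fc k m n 0) = fun _ => (0 : ℂ) := by
    funext n
    simp [fc, zero_pow (by omega : n + m ≠ 0)]
  rw [this]
  exact summable_zero

lemma gfun_hasFDerivAt (k : ℝ) (m : ℕ) (hm : 1 ≤ m) {z : ℂ} (hz : z ∈ Metric.ball (0:ℂ) 2) :
    HasFDerivAt (gfun k m) (∑' n, fd k m n z) z := by
  apply hasFDerivAt_tsum_of_isPreconnected (summable_u k m) Metric.isOpen_ball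
    (convex_ball (0:ℂ) 2).isPreconnected
    (fun n x _ => fc_hasFDerivAt k m n x)
    (fun n x hx => norm_fd_le k m n x (le_of_lt (mem_ball_zero_iff.1 hx)))
    (Metric.mem_ball_self (by norm_num))
    (summable_fc_zero k m hm) hz

lemma norm_tsum_fd_le (k : ℝ) (m : ℕ) {z : ℂ} (hz : ‖z‖ ≤ 2) :
    ‖∑' n, fd k m n z‖ ≤ ∑' n, |bterm m k n| * ((2 * n + m) * 4 ^ (n + m)) := by
  have hs : Summable (fun n => ‖fd k m n z‖) :=
    Summable.of_nonneg_of_le (fun n => norm_nonneg _) (fun n => norm_fd_le k m n z hz)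
      (summable_u k m)
  exact le_trans (norm_tsum_le_tsum_norm hs)
    (Summable.tsum_le_tsum (fun n => norm_fd_le k m n z hz) hs (summable_u k m))

-- Chunk E : representation
lemma besselJ_mul (m : ℕ) (k r : ℝ) : besselJ m (k * r) = ∑' n, bterm m k n * r ^ (2 * n + m) := by
  rw [besselJ_eq_tsum]
  apply tsum_congr
  intro n
  unfold bterm
  have : k * r / 2 = k / 2 * r := by ring
  rw [this, mul_pow]
  ring

lemma vEig_eq_gfun (β : ℕ → ℝ) (k : ℝ) (m : ℕ) (hm : 1 ≤ m) (z : ℂ) :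
    vEig β k m z = (β m : ℂ) * gfun k m z := by
  rcases eq_or_ne z 0 with rfl | hz
  · have h1 : besselJ m (k * ‖(0:ℂ)‖) = 0 := by
      rw [norm_zero, mul_zero, besselJ_eq_tsum]
      have : (fun n => bterm m 0 n) = fun _ => (0:ℝ) := by
        funext n
        unfold bterm
        rw [zero_div, zero_pow (by omega : 2 * n + m ≠ 0), mul_zero]
      rw [this, tsum_zero]
    have h2 : gfun k m 0 = 0 := by
      rw [gfun]
      have : (fun n => fc k m n 0) = fun _ => (0:ℂ) := by
        funext n
        simp [fc, zero_pow (by omega : n + m ≠ 0)]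
      rw [this, tsum_zero]
    rw [vEig, h1, h2]
    simp
  · -- z ≠ 0
    have hr : (0:ℝ) < ‖z‖ := by
      simpa [AbsoluteValue.pos_iff] using hz
    have hzeq : (‖z‖ : ℂ) * Complex.exp (z.arg * Complex.I) = z :=
      Complex.norm_mul_exp_arg_mul_I z
    -- z^m identity
    have hzm : z ^ m = (‖z‖ : ℂ) ^ m * Complex.exp (Complex.I * m * z.arg) := by
      conv_lhs => rw [← hzeq]
      rw [mul_pow, ← Complex.exp_nat_mul]
      congr 2
      ring
    -- z * conj z
    have hzc : z * (starRingEnd ℂ) z = ((‖z‖ : ℝ) : ℂ) ^ 2 := by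
      rw [Complex.mul_conj, Complex.normSq_eq_norm_sq]
      push_cast
      ring
    -- term identity
    have hterm : ∀ n : ℕ, fc k m n z
        = ((bterm m k n * (‖z‖) ^ (2 * n + m) : ℝ) : ℂ) * Complex.exp (Complex.I * m * z.arg) := by
      intro n
      unfold fc
      have h1 : z ^ (n + m) * ((starRingEnd ℂ) z) ^ n = z ^ m * (z * (starRingEnd ℂ) z) ^ n := by
        rw [pow_add, mul_pow]
        ring
      rw [h1, hzc, hzm]
      push_cast
      rw [← pow_mul, pow_add, pow_mul]
      ring
    rw [vEig, gfun]
    rw [tsum_congr hterm, tsum_mul_right, ← Complex.ofReal_tsum, ← besselJ_mul]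
    ring

lemma integral_ball_norm_pow (p : ℕ) :
    ∫ z in Metric.ball (0:ℂ) 1, ‖z‖ ^ p = 2 * Real.pi / (p + 2) := by
  classical
  set f : ℝ → ℝ := Set.indicator (Set.Iio 1) (fun y => y ^ p) with hf
  have h1 : ∫ z in Metric.ball (0:ℂ) 1, ‖z‖ ^ p
      = ∫ z : ℂ, Set.indicator (Metric.ball 0 1) (fun z : ℂ => ‖z‖ ^ p) z := by
    rw [integral_indicator measurableSet_ball]
  have h2 : (fun z : ℂ => Set.indicator (Metric.ball 0 1) (fun z : ℂ => ‖z‖ ^ p) z)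
      = fun z : ℂ => f ‖z‖ := by
    funext z
    by_cases h : ‖z‖ < 1
    · rw [Set.indicator_of_mem (mem_ball_zero_iff.2 h), hf,
        Set.indicator_of_mem (Set.mem_Iio.2 h)]
    · rw [Set.indicator_of_notMem (fun hz => h (mem_ball_zero_iff.1 hz)), hf,
        Set.indicator_of_notMem (fun hz => h (Set.mem_Iio.1 hz))]
  rw [h1, h2, integral_fun_norm_addHaar volume f]
  have hdim : Module.finrank ℝ ℂ = 2 := Complex.finrank_real_complex
  rw [hdim]
  have hvol : volume.real (Metric.ball (0:ℂ) 1) = Real.pi := by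
    rw [measureReal_def, Complex.volume_ball]
    simp [ENNReal.ofReal_one]
  rw [hvol]
  have h3 : (fun y : ℝ => y ^ (2 - 1) • f y)
      = fun y : ℝ => Set.indicator (Set.Iio 1) (fun y => y ^ (p + 1)) y := by
    funext y
    by_cases h : y ∈ Set.Iio 1
    · rw [hf, Set.indicator_of_mem h, Set.indicator_of_mem h]
      simp [pow_succ]
      ring
    · rw [hf, Set.indicator_of_notMem h, Set.indicator_of_notMem h, smul_zero]
  rw [h3]
  have h4 : ∫ y in Set.Ioi (0:ℝ), Set.indicator (Set.Iio 1) (fun y => y ^ (p + 1)) y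
      = ∫ y in Set.Ioo (0:ℝ) 1, y ^ (p + 1) := by
    rw [setIntegral_indicator measurableSet_Iio, Set.Ioi_inter_Iio]
  rw [h4]
  have h5 : ∫ y in Set.Ioo (0:ℝ) 1, y ^ (p + 1) = 1 / (p + 2) := by
    rw [← MeasureTheory.integral_Ioc_eq_integral_Ioo,
      ← intervalIntegral.integral_of_le (by norm_num : (0:ℝ) ≤ 1)]
    rw [integral_pow]
    push_cast
    norm_num
    ring
  rw [h5]
  simp only [nsmul_eq_mul, smul_eq_mul]
  push_cast
  ring

lemma norm_vEig_sq (β : ℕ → ℝ) (k : ℝ) (m : ℕ) (z : ℂ) :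
    ‖vEig β k m z‖ ^ 2 = (β m) ^ 2 * (besselJ m (k * ‖z‖)) ^ 2 := by
  rw [vEig, norm_mul, norm_mul]
  have h1 : ‖Complex.exp (Complex.I * (m : ℂ) * (z.arg : ℂ))‖ = 1 := by
    rw [Complex.norm_exp]
    have : (Complex.I * (m : ℂ) * (z.arg : ℂ)).re = 0 := by simp
    rw [this, Real.exp_zero]
  rw [h1, mul_one, Complex.norm_real, Complex.norm_real, Real.norm_eq_abs, Real.norm_eq_abs]
  rw [mul_pow, _root_.sq_abs, _root_.sq_abs]

lemma beta_lower (k : ℝ) (hk : 0 < k) (β : ℕ → ℝ) (m : ℕ) (hβ : 0 < β m)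
    (hnorm : (∫ z in Metric.ball (0 : ℂ) 1, ‖vEig β k m z‖ ^ 2) = 1) :
    1 ≤ (β m) ^ 2 * ((k / 2) ^ m / m.factorial * Real.exp ((k / 2) ^ 2)) ^ 2
        * (2 * Real.pi / (2 * m + 2)) := by
  set C := (k / 2) ^ m / (m.factorial : ℝ) * Real.exp ((k / 2) ^ 2) with hC
  have hCpos : 0 < C := by rw [hC]; positivity
  have hpoint : ∀ z : ℂ, z ∈ Metric.ball (0:ℂ) 1 →
      ‖vEig β k m z‖ ^ 2 ≤ (β m) ^ 2 * C ^ 2 * ‖z‖ ^ (2 * m) := by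
    intro z hz
    have hz1 : ‖z‖ ≤ 1 := le_of_lt (mem_ball_zero_iff.1 hz)
    have hzn : (0:ℝ) ≤ ‖z‖ := norm_nonneg z
    have hJ : |besselJ m (k * ‖z‖)| ≤ C * ‖z‖ ^ m := by
      refine le_trans (besselJ_abs_le m (k * ‖z‖)) ?_
      have habs : ‖z‖ = ‖z‖ := rfl
      have h1 : |k * ‖z‖| = k * ‖z‖ := by
        rw [habs, _root_.abs_of_nonneg (by positivity)]
      rw [h1, habs]
      have h2 : (k * ‖z‖ / 2) ^ m = (k / 2) ^ m * ‖z‖ ^ m := by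
        rw [← mul_pow]; congr 1; ring
      have h3 : Real.exp ((k * ‖z‖ / 2) ^ 2) ≤ Real.exp ((k / 2) ^ 2) := by
        apply Real.exp_le_exp.2
        have h5 : k * ‖z‖ / 2 ≤ k / 2 := by nlinarith
        exact pow_le_pow_left₀ (by positivity) h5 2
      calc (k * ‖z‖ / 2) ^ m / m.factorial * Real.exp ((k * ‖z‖ / 2) ^ 2)
          ≤ (k * ‖z‖ / 2) ^ m / m.factorial * Real.exp ((k / 2) ^ 2) := by
            apply mul_le_mul_of_nonneg_left h3 (by positivity)
        _ = C * ‖z‖ ^ m := by rw [hC, h2]; ring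
    rw [norm_vEig_sq]
    have hJ2 : (besselJ m (k * ‖z‖)) ^ 2 ≤ C ^ 2 * ‖z‖ ^ (2 * m) := by
      have h4 : (besselJ m (k * ‖z‖)) ^ 2 ≤ (C * ‖z‖ ^ m) ^ 2 := by
        rw [← _root_.sq_abs (besselJ m (k * ‖z‖))]
        exact pow_le_pow_left₀ (abs_nonneg _) hJ 2
      calc (besselJ m (k * ‖z‖)) ^ 2 ≤ (C * ‖z‖ ^ m) ^ 2 := h4
        _ = C ^ 2 * ‖z‖ ^ (2 * m) := by rw [mul_pow, ← pow_mul, mul_comm m 2]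
    rw [mul_assoc]
    exact mul_le_mul_of_nonneg_left hJ2 (sq_nonneg (β m))
  -- integrability of the bound
  have hcont : Continuous (fun z : ℂ => (β m) ^ 2 * C ^ 2 * ‖z‖ ^ (2 * m)) :=
    continuous_const.mul (continuous_norm.pow (2 * m))
  have hInt : IntegrableOn (fun z : ℂ => (β m) ^ 2 * C ^ 2 * ‖z‖ ^ (2 * m))
      (Metric.ball (0:ℂ) 1) volume := by
    apply IntegrableOn.mono_set _ Metric.ball_subset_closedBall
    exact (hcont.continuousOn).integrableOn_compact (isCompact_closedBall 0 1)
  have hle : (∫ z in Metric.ball (0 : ℂ) 1, ‖vEig β k m z‖ ^ 2)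
      ≤ ∫ z in Metric.ball (0 : ℂ) 1, (β m) ^ 2 * C ^ 2 * ‖z‖ ^ (2 * m) := by
    apply integral_mono_of_nonneg
    · exact ae_of_all _ (fun z => sq_nonneg _)
    · exact hInt
    · exact (ae_restrict_iff' measurableSet_ball).2 (ae_of_all _ hpoint)
  have heval : (∫ z in Metric.ball (0 : ℂ) 1, (β m) ^ 2 * C ^ 2 * ‖z‖ ^ (2 * m))
      = (β m) ^ 2 * C ^ 2 * (2 * Real.pi / (2 * m + 2)) := by
    rw [integral_const_mul, integral_ball_norm_pow (2 * m)]
    push_cast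
    ring
  rw [hnorm] at hle
  rw [heval] at hle
  calc (1:ℝ) ≤ (β m) ^ 2 * C ^ 2 * (2 * Real.pi / (2 * m + 2)) := hle
    _ = (β m) ^ 2 * ((k / 2) ^ m / m.factorial * Real.exp ((k / 2) ^ 2)) ^ 2
        * (2 * Real.pi / (2 * m + 2)) := by rw [hC]

lemma vEig_hasFDerivAt (β : ℕ → ℝ) (k : ℝ) (m : ℕ) (hm : 1 ≤ m) {z : ℂ}
    (hz : z ∈ Metric.ball (0:ℂ) 2) :
    HasFDerivAt (vEig β k m) ((β m : ℂ) • (∑' n, fd k m n z)) z := by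
  have h : (vEig β k m) = fun w => (β m : ℂ) * gfun k m w := funext (vEig_eq_gfun β k m hm)
  rw [h]
  exact (gfun_hasFDerivAt k m hm hz).const_mul _

lemma fderiv_vEig_eq (β : ℕ → ℝ) (k : ℝ) (m : ℕ) (hm : 1 ≤ m) {z : ℂ}
    (hz : z ∈ Metric.ball (0:ℂ) 2) :
    fderiv ℝ (vEig β k m) z = (β m : ℂ) • (∑' n, fd k m n z) :=
  (vEig_hasFDerivAt β k m hm hz).fderiv

lemma deriv_lower (β : ℕ → ℝ) (k : ℝ) (m : ℕ) (hm : 1 ≤ m) (hβ : 0 < β m)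
    (r : ℝ) (hr0 : 0 < r) (hr1 : r < 1) :
    β m * m * |besselJ m (k * r)| ≤ ‖fderiv ℝ (vEig β k m) ((r : ℝ) : ℂ)‖ * r := by
  have hmem : ((r:ℝ):ℂ) ∈ Metric.ball (0:ℂ) 2 := by
    rw [mem_ball_zero_iff]
    rw [Complex.norm_real, Real.norm_eq_abs, abs_of_pos hr0]
    linarith
  have hv := vEig_hasFDerivAt β k m hm hmem
  -- the curve
  set γ : ℝ → ℂ := fun θ => ((r:ℝ):ℂ) * Complex.exp ((θ:ℂ) * Complex.I) with hγdef
  have hγ0 : γ 0 = ((r:ℝ):ℂ) := by simp [hγdef]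
  have hγ : HasDerivAt γ (((r:ℝ):ℂ) * Complex.I) 0 := by
    have hbase : HasDerivAt (fun θ : ℝ => (θ:ℂ)) 1 0 := by
      simpa using (hasDerivAt_id (0:ℝ)).ofReal_comp
    have h1 : HasDerivAt (fun θ : ℝ => (θ:ℂ) * Complex.I) Complex.I 0 := by
      simpa using hbase.mul_const Complex.I
    have h2 := h1.cexp
    have h3 := h2.const_mul ((r:ℝ):ℂ)
    simpa using h3
  -- composite has derivative fderiv applied
  have hcomp : HasDerivAt (vEig β k m ∘ γ) (((β m : ℂ) • (∑' n, fd k m n ((r:ℝ):ℂ))) (((r:ℝ):ℂ) * Complex.I)) 0 := by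
    refine HasFDerivAt.comp_hasDerivAt 0 ?_ hγ
    rw [hγ0]
    exact hv
  -- explicit derivative
  have hexp : HasDerivAt (fun θ : ℝ => ((β m * besselJ m (k * r) : ℝ) : ℂ) * Complex.exp (Complex.I * m * (θ:ℂ)))
      (((β m * besselJ m (k * r) : ℝ) : ℂ) * (Complex.I * m)) 0 := by
    have hbase : HasDerivAt (fun θ : ℝ => (θ:ℂ)) 1 0 := by
      simpa using (hasDerivAt_id (0:ℝ)).ofReal_comp
    have h1 : HasDerivAt (fun θ : ℝ => Complex.I * m * (θ:ℂ)) (Complex.I * m) 0 := by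
      simpa using hbase.const_mul (Complex.I * m)
    have h2 := h1.cexp
    have h3 := h2.const_mul ((β m * besselJ m (k * r) : ℝ) : ℂ)
    simpa using h3
  -- eventual equality near 0
  have hev : (vEig β k m ∘ γ) =ᶠ[nhds (0:ℝ)]
      fun θ : ℝ => ((β m * besselJ m (k * r) : ℝ) : ℂ) * Complex.exp (Complex.I * m * (θ:ℂ)) := by
    have hopen : Set.Ioo (-Real.pi) Real.pi ∈ nhds (0:ℝ) := by
      apply Ioo_mem_nhds
      · linarith [Real.pi_pos]
      · exact Real.pi_pos
    filter_upwards [hopen] with θ hθ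
    have habs : ‖γ θ‖ = r := by
      rw [hγdef]
      simp only [norm_mul, Complex.norm_real, Real.norm_eq_abs, abs_of_pos hr0, Complex.norm_exp]
      simp
    have harg : (γ θ).arg = θ := by
      have hγθ : γ θ = ((r:ℝ):ℂ) * Complex.exp ((θ:ℂ) * Complex.I) := rfl
      rw [hγθ, Complex.exp_mul_I]
      exact Complex.arg_mul_cos_add_sin_mul_I hr0 ⟨hθ.1, le_of_lt hθ.2⟩
    show vEig β k m (γ θ) = _
    rw [vEig, habs, harg]
    push_cast
    ring
  have hcomp' : HasDerivAt (vEig β k m ∘ γ)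
      (((β m * besselJ m (k * r) : ℝ) : ℂ) * (Complex.I * m)) 0 :=
    hexp.congr_of_eventuallyEq hev
  have huniq := hcomp.unique hcomp'
  -- norms
  have hnorm1 : ‖((β m * besselJ m (k * r) : ℝ) : ℂ) * (Complex.I * m)‖ = β m * m * |besselJ m (k * r)| := by
    rw [norm_mul, norm_mul, Complex.norm_real, Complex.norm_I, Complex.norm_natCast, Real.norm_eq_abs,
      abs_mul, abs_of_pos hβ]
    ring
  have hle : ‖((β m : ℂ) • (∑' n, fd k m n ((r:ℝ):ℂ))) (((r:ℝ):ℂ) * Complex.I)‖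
      ≤ ‖(β m : ℂ) • (∑' n, fd k m n ((r:ℝ):ℂ))‖ * r := by
    have := ContinuousLinearMap.le_opNorm ((β m : ℂ) • (∑' n, fd k m n ((r:ℝ):ℂ))) (((r:ℝ):ℂ) * Complex.I)
    have hnr : ‖((r:ℝ):ℂ) * Complex.I‖ = r := by
      rw [norm_mul, Complex.norm_real, Complex.norm_I, Real.norm_eq_abs, abs_of_pos hr0, mul_one]
    rwa [hnr] at this
  rw [fderiv_vEig_eq β k m hm hmem]
  calc β m * m * |besselJ m (k * r)| = ‖((β m * besselJ m (k * r) : ℝ) : ℂ) * (Complex.I * m)‖ := hnorm1.symm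
    _ = ‖((β m : ℂ) • (∑' n, fd k m n ((r:ℝ):ℂ))) (((r:ℝ):ℂ) * Complex.I)‖ := by rw [huniq]
    _ ≤ ‖(β m : ℂ) • (∑' n, fd k m n ((r:ℝ):ℂ))‖ * r := hle


lemma norm_csmul_le (c : ℂ) (T : ℂ →L[ℝ] ℂ) : ‖c • T‖ ≤ ‖c‖ * ‖T‖ := by
  apply ContinuousLinearMap.opNorm_le_bound _ (by positivity)
  intro w
  rw [ContinuousLinearMap.smul_apply, norm_smul, mul_assoc]
  exact mul_le_mul_of_nonneg_left (T.le_opNorm w) (norm_nonneg c)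


end Aux

set_option maxHeartbeats 2000000 in
/-- Fix `k > 0`, `r₀ = 1`, and let `v_m = β_m J_m(kr)e^{imθ}`
be `L²(B₁)`-normalized. Then `‖∇v_m‖_{L^∞(B₁)}/k ≥ C(k) m^{3/2}` for all
sufficiently large `m`. -/
theorem gradient_sup_norm_blowup (k : ℝ) (hk : 0 < k) (β : ℕ → ℝ)
    (hβpos : ∀ m, 0 < β m)
    (hnorm : ∀ m, (∫ z in Metric.ball (0 : ℂ) 1, ‖vEig β k m z‖ ^ 2) = 1) :
    ∃ C > 0, ∃ M : ℕ, ∀ m ≥ M,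
      C * (m : ℝ) ^ ((3 : ℝ) / 2) ≤
        (⨆ z : Metric.ball (0 : ℂ) 1, ‖fderiv ℝ (vEig β k m) (z : ℂ)‖) / k := by
  set E := Real.exp ((k / 2) ^ 2) with hE
  have hEpos : 0 < E := Real.exp_pos _
  have hπ : 0 < Real.pi := Real.pi_pos
  have hsπ : 0 < Real.sqrt Real.pi := Real.sqrt_pos.2 hπ
  have hexp1 : 0 < Real.exp 1 := Real.exp_pos 1
  refine ⟨(2 * Real.exp 1 * k * Real.sqrt Real.pi * E)⁻¹, by positivity,
    ⌈2 * E⌉₊ + 1, fun m hmM => ?_⟩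
  have hm1 : 1 ≤ m := le_trans (by omega) hmM
  have hm0 : (0:ℝ) < m := by
    have : 0 < m := lt_of_lt_of_le Nat.zero_lt_one hm1
    exact_mod_cast this
  have hM : 2 * E ≤ (m : ℝ) := by
    have h1 : (2*E) ≤ (⌈2*E⌉₊ : ℝ) := Nat.le_ceil _
    have h2 : ((⌈2*E⌉₊ : ℕ) : ℝ) ≤ (m:ℝ) := by
      exact_mod_cast le_trans (Nat.le_succ _) hmM
    linarith
  set r : ℝ := (m : ℝ) / (m + 1) with hr
  have hr0 : 0 < r := by rw [hr]; positivity
  have hr1 : r < 1 := by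
    rw [hr, div_lt_one (by positivity)]; linarith
  set A := (k / 2) ^ m / (m.factorial : ℝ) with hA
  have hApos : 0 < A := by rw [hA]; positivity
  -- Bessel lower bound at k*r
  have hJlow : A * r ^ m * (1/2) ≤ besselJ m (k * r) := by
    have hx : 0 ≤ k * r := by positivity
    refine le_trans ?_ (besselJ_ge m (k * r) hx)
    have hpow : (k * r / 2) ^ m = (k/2) ^ m * r ^ m := by
      rw [← mul_pow]; congr 1; ring
    have hpar : (1:ℝ)/2 ≤ 1 - (Real.exp ((k * r / 2) ^ 2) - 1) / (m + 1) := by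
      have he1 : Real.exp ((k * r / 2) ^ 2) ≤ E := by
        rw [hE]
        apply Real.exp_le_exp.2
        have h5 : k * r / 2 ≤ k / 2 := by nlinarith
        exact pow_le_pow_left₀ (by positivity) h5 2
      have he2 : (Real.exp ((k * r / 2) ^ 2) - 1) / (m + 1) ≤ 1/2 := by
        rw [div_le_iff₀ (by positivity)]
        nlinarith
      linarith
    calc A * r ^ m * (1/2) = (k * r / 2) ^ m / m.factorial * (1/2) := by
          rw [hpow, hA]; ring
      _ ≤ (k * r / 2) ^ m / m.factorial * (1 - (Real.exp ((k * r / 2) ^ 2) - 1) / (m + 1)) := by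
          apply mul_le_mul_of_nonneg_left hpar (by positivity)
  -- r ^ m ≥ 1 / e
  have hre : 1 ≤ Real.exp 1 * r ^ m := by
    have hb : 1 + 1/(m:ℝ) ≤ Real.exp (1/(m:ℝ)) := by
      have := Real.add_one_le_exp (1/(m:ℝ)); linarith
    have hbm : (1 + 1/(m:ℝ)) ^ m ≤ Real.exp 1 := by
      calc (1 + 1/(m:ℝ)) ^ m ≤ (Real.exp (1/(m:ℝ))) ^ m :=
            pow_le_pow_left₀ (by positivity) hb m
        _ = Real.exp 1 := by
            rw [← Real.exp_nat_mul]
            congr 1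
            field_simp
    have hrm1 : r * (1 + 1/(m:ℝ)) = 1 := by
      rw [hr]; field_simp
    calc (1:ℝ) = (r * (1 + 1/(m:ℝ))) ^ m := by rw [hrm1, one_pow]
      _ = r ^ m * (1 + 1/(m:ℝ)) ^ m := mul_pow _ _ _
      _ ≤ r ^ m * Real.exp 1 := mul_le_mul_of_nonneg_left hbm (by positivity)
      _ = Real.exp 1 * r ^ m := by ring
  have hJ2 : A / (2 * Real.exp 1) ≤ besselJ m (k * r) := by
    refine le_trans ?_ hJlow
    rw [div_le_iff₀ (by positivity)]
    nlinarith [mul_le_mul_of_nonneg_left hre hApos.le]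
  have hJpos : 0 < besselJ m (k * r) := lt_of_lt_of_le (by positivity) hJ2
  -- the sup
  set S := (⨆ z : Metric.ball (0 : ℂ) 1, ‖fderiv ℝ (vEig β k m) (z : ℂ)‖) with hS
  have hmemr : ((r : ℝ) : ℂ) ∈ Metric.ball (0:ℂ) 1 := by
    rw [mem_ball_zero_iff, Complex.norm_real, Real.norm_eq_abs, abs_of_pos hr0]
    exact hr1
  have hbdd : BddAbove (Set.range fun z : Metric.ball (0:ℂ) 1 =>
      ‖fderiv ℝ (vEig β k m) (z : ℂ)‖) := by
    refine ⟨‖((β m : ℝ) : ℂ)‖ * ∑' n, |bterm m k n| * ((2 * n + m) * 4 ^ (n + m)), ?_⟩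
    rintro x ⟨⟨z, hz⟩, rfl⟩
    have hz2 : z ∈ Metric.ball (0:ℂ) 2 := Metric.ball_subset_ball (by norm_num) hz
    have hzn : ‖z‖ ≤ 2 := le_of_lt (by simpa [mem_ball_zero_iff] using hz2)
    simp only
    rw [fderiv_vEig_eq β k m hm1 hz2]
    refine le_trans (norm_csmul_le _ _) ?_
    exact mul_le_mul_of_nonneg_left (norm_tsum_fd_le k m hzn) (norm_nonneg _)
  have hSr : ‖fderiv ℝ (vEig β k m) ((r:ℝ):ℂ)‖ ≤ S :=
    le_ciSup hbdd (⟨((r:ℝ):ℂ), hmemr⟩ : Metric.ball (0:ℂ) 1)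
  have hS0 : 0 ≤ S := le_trans (norm_nonneg _) hSr
  have hβm0 : (0:ℝ) ≤ β m * m := mul_nonneg (hβpos m).le (Nat.cast_nonneg m)
  have hSlow : β m * m * besselJ m (k * r) ≤ S := by
    have h1 := deriv_lower β k m hm1 (hβpos m) r hr0 hr1
    calc β m * m * besselJ m (k * r) ≤ β m * m * |besselJ m (k * r)| :=
          mul_le_mul_of_nonneg_left (le_abs_self _) hβm0
      _ ≤ ‖fderiv ℝ (vEig β k m) ((r:ℝ):ℂ)‖ * r := h1
      _ ≤ S * r := mul_le_mul_of_nonneg_right hSr (le_of_lt hr0)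
      _ ≤ S * 1 := mul_le_mul_of_nonneg_left (le_of_lt hr1) hS0
      _ = S := mul_one S
  have hS2 : β m * ((m:ℝ) * (A / (2 * Real.exp 1))) ≤ S := by
    refine le_trans ?_ hSlow
    have h3 := mul_le_mul_of_nonneg_left hJ2 hβm0
    calc β m * ((m:ℝ) * (A / (2 * Real.exp 1))) = β m * m * (A / (2 * Real.exp 1)) := by ring
      _ ≤ β m * m * besselJ m (k * r) := h3
  -- lower bound on β m
  have hβlow : Real.sqrt m / (Real.sqrt Real.pi * A * E) ≤ β m := by
    have hBB := beta_lower k hk β m (hβpos m) (hnorm m)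
    rw [← hA, ← hE] at hBB
    set B := Real.sqrt m / (Real.sqrt Real.pi * A * E) with hB
    have hB0 : 0 ≤ B := by rw [hB]; positivity
    have hsm : Real.sqrt m ^ 2 = (m:ℝ) := Real.sq_sqrt hm0.le
    have hsp : Real.sqrt Real.pi ^ 2 = Real.pi := Real.sq_sqrt hπ.le
    have hQpos : (0:ℝ) < (A * E) ^ 2 * (2 * Real.pi / (2 * m + 2)) := by positivity
    have hB2 : B ^ 2 * ((A * E) ^ 2 * (2 * Real.pi / (2 * m + 2))) = 2 * m / (2 * m + 2) := by
      rw [hB, div_pow, mul_pow, mul_pow, mul_pow, hsm, hsp]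
      field_simp
    have hsq : B ^ 2 ≤ (β m) ^ 2 := by
      have h1 : B ^ 2 * ((A * E) ^ 2 * (2 * Real.pi / (2 * m + 2)))
          ≤ (β m) ^ 2 * ((A * E) ^ 2 * (2 * Real.pi / (2 * m + 2))) := by
        rw [hB2, ← mul_assoc]
        refine le_trans ?_ hBB
        rw [div_le_one (by positivity)]
        linarith
      exact (mul_le_mul_iff_of_pos_right hQpos).1 h1
    exact le_of_pow_le_pow_left₀ two_ne_zero (hβpos m).le hsq
  -- finish
  have h32 : (m : ℝ) ^ ((3:ℝ)/2) = (m:ℝ) * Real.sqrt m := by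
    rw [show (3:ℝ)/2 = 1 + 1/2 by norm_num, Real.rpow_add hm0, Real.rpow_one,
      ← Real.sqrt_eq_rpow]
  rw [h32]
  have key : (2 * Real.exp 1 * k * Real.sqrt Real.pi * E)⁻¹ * ((m:ℝ) * Real.sqrt m)
      = (Real.sqrt m / (Real.sqrt Real.pi * A * E)) * ((m:ℝ) * (A / (2 * Real.exp 1))) / k := by
    field_simp
  rw [key]
  apply (div_le_div_iff_of_pos_right hk).2
  refine le_trans ?_ hS2
  apply mul_le_mul_of_nonneg_right hβlow
  positivity
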